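/- Let σ satisfy |σ'(z) − σ'(z̃)| ≤ β|z − z̃| and sup_z |σ'(z)| ≤ κ. Define F_m^p = { x ↦ (1/√m) ∑_{i=1}^m c_i σ(θ_iᵀ x) : ‖θ_i − θ_i(0)‖₂ ≤ p/√m for all i } with fixed c_i ∈ {±1} and fixed θ(0). Assume ‖x_j‖₂ ≤ 1 for j = 1, …, n. Then the empirical Rademacher complexity of the centered class {F(·;θ) − F(·;θ(0)) : θ admissible} satisfies R̂_n ≤ p²β/(2√m) + κp/√n. -/

import Mathlib

open scoped RealInnerProductSpace

lemma taylor_quad {σ : ℝ → ℝ} {β : ℝ} (hσ : Differentiable ℝ σ)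
    (hβ : ∀ z w : ℝ, |deriv σ z - deriv σ w| ≤ β * |z - w|) (a b : ℝ) :
    |σ b - σ a - deriv σ a * (b - a)| ≤ β / 2 * (b - a) ^ 2 := by
  set d := b - a with hd
  set g : ℝ → ℝ := fun t => σ (a + t * d) - σ a - t * (deriv σ a * d) with hg
  have hg' : ∀ t : ℝ, HasDerivAt g ((deriv σ (a + t * d) - deriv σ a) * d) t := by
    intro t
    have h1 : HasDerivAt (fun t : ℝ => a + t * d) d t := by
      simpa using ((hasDerivAt_id t).mul_const d).const_add a
    have h2 : HasDerivAt (fun t => σ (a + t * d)) (deriv σ (a + t * d) * d) t :=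
      ((hσ _).hasDerivAt).comp t h1
    have h3 : HasDerivAt (fun t : ℝ => t * (deriv σ a * d)) (deriv σ a * d) t := by
      simpa using (hasDerivAt_id t).mul_const (deriv σ a * d)
    have h4 := (h2.sub_const (σ a)).sub h3
    exact h4.congr_deriv (by ring)
  have hgc : Continuous g := by
    have : Differentiable ℝ g := fun t => (hg' t).differentiableAt
    exact this.continuous
  have key := image_norm_le_of_norm_deriv_right_le_deriv_boundary
    (f := g) (f' := fun t => (deriv σ (a + t * d) - deriv σ a) * d)
    (a := 0) (b := 1) hgc.continuousOn
    (fun t _ => (hg' t).hasDerivWithinAt)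
    (B := fun t => β * d ^ 2 * t ^ 2 / 2) (B' := fun t => β * d ^ 2 * t)
    (by simp [hg])
    (by
      intro t
      have := ((hasDerivAt_pow 2 t).const_mul (β * d ^ 2)).div_const 2
      exact this.congr_deriv (by push_cast; ring))
    (by
      intro t ht
      have h1 : |deriv σ (a + t * d) - deriv σ a| ≤ β * (t * |d|) := by
        have := hβ (a + t * d) a
        simpa [abs_mul, abs_of_nonneg ht.1] using this
      have h2 : ‖(deriv σ (a + t * d) - deriv σ a) * d‖ ≤ β * (t * |d|) * |d| := by
        rw [Real.norm_eq_abs, abs_mul]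
        exact mul_le_mul_of_nonneg_right h1 (abs_nonneg d)
      refine h2.trans (le_of_eq ?_)
      have : |d| * |d| = d ^ 2 := by rw [abs_mul_abs_self]; ring
      show β * (t * |d|) * |d| = β * d ^ 2 * t
      linear_combination β * t * this)
  have k1 := key (x := 1) (by norm_num)
  have hg1 : g 1 = σ b - σ a - deriv σ a * (b - a) := by
    simp [hg, hd]
  rw [hg1, Real.norm_eq_abs] at k1
  calc |σ b - σ a - deriv σ a * (b - a)| ≤ β * d ^ 2 * 1 ^ 2 / 2 := k1
    _ = β / 2 * (b - a) ^ 2 := by rw [hd]; ring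

lemma sum_sign_mul {n : ℕ} (j k : Fin n) :
    ∑ b : Fin n → Bool, (if b j then (1:ℝ) else -1) * (if b k then (1:ℝ) else -1)
      = if j = k then (2 ^ n : ℝ) else 0 := by
  rcases eq_or_ne j k with rfl | hjk
  · simp only [if_pos rfl]
    have : ∀ b : Fin n → Bool,
        (if b j then (1:ℝ) else -1) * (if b j then (1:ℝ) else -1) = 1 := by
      intro b; cases b j <;> norm_num
    rw [Finset.sum_congr rfl (fun b _ => this b)]
    simp [Finset.card_univ]
  · rw [if_neg hjk]
    apply Finset.sum_ninvolution (g := fun b => Function.update b j (!b j))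
    · intro b
      rw [Function.update_self, Function.update_of_ne (Ne.symm hjk)]
      cases b j <;> cases b k <;> norm_num
    · intro b _
      intro h
      have := congrFun h j
      rw [Function.update_self] at this
      cases b j <;> simp_all
    · intro b; exact Finset.mem_univ _
    · intro b
      funext l
      rcases eq_or_ne l j with rfl | hl
      · simp [Function.update_self]
      · simp [Function.update_of_ne hl]

lemma avg_norm_sum_sign {d n : ℕ} (x : Fin n → EuclideanSpace ℝ (Fin d))
    (hx : ∀ j, ‖x j‖ ≤ 1) (a : Fin n → ℝ) (κ : ℝ) (hκ0 : 0 ≤ κ) (ha : ∀ j, |a j| ≤ κ) :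
    ∑ b : Fin n → Bool, ‖∑ j, ((if b j then (1:ℝ) else -1) * a j) • x j‖
      ≤ 2 ^ n * (κ * Real.sqrt n) := by
  set ε : (Fin n → Bool) → Fin n → ℝ := fun b j => if b j then 1 else -1 with hε
  set w : (Fin n → Bool) → EuclideanSpace ℝ (Fin d) := fun b => ∑ j, (ε b j * a j) • x j with hw
  have hsqsum : ∑ b : Fin n → Bool, ‖w b‖ ^ 2 ≤ 2 ^ n * (n * κ ^ 2) := by
    have hsq : ∀ b, ‖w b‖ ^ 2
        = ∑ j, ∑ k, (ε b j * ε b k) * ((a j * a k) * ⟪x j, x k⟫) := by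
      intro b
      rw [← real_inner_self_eq_norm_sq, hw]
      rw [sum_inner]
      refine Finset.sum_congr rfl fun j _ => ?_
      rw [inner_sum]
      refine Finset.sum_congr rfl fun k _ => ?_
      rw [real_inner_smul_left, real_inner_smul_right]
      ring
    calc ∑ b : Fin n → Bool, ‖w b‖ ^ 2
        = ∑ j, ∑ k, ((a j * a k) * ⟪x j, x k⟫) * ∑ b : Fin n → Bool, ε b j * ε b k := by
          rw [Finset.sum_congr rfl fun b _ => hsq b]
          rw [Finset.sum_comm]
          refine Finset.sum_congr rfl fun j _ => ?_
          rw [Finset.sum_comm]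
          refine Finset.sum_congr rfl fun k _ => ?_
          rw [Finset.mul_sum]
          refine Finset.sum_congr rfl fun b _ => ?_
          ring
      _ = ∑ j, (a j * a j) * ⟪x j, x j⟫ * 2 ^ n := by
          refine Finset.sum_congr rfl fun j _ => ?_
          rw [Finset.sum_eq_single j]
          · rw [sum_sign_mul, if_pos rfl]
          · intro k _ hkj
            rw [sum_sign_mul, if_neg (Ne.symm hkj), mul_zero]
          · intro h; exact absurd (Finset.mem_univ j) h
      _ ≤ ∑ j : Fin n, κ ^ 2 * 2 ^ n := by
          refine Finset.sum_le_sum fun j _ => ?_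
          have h1 : ⟪x j, x j⟫ = ‖x j‖ ^ 2 := real_inner_self_eq_norm_sq _
          have h2 : a j * a j ≤ κ ^ 2 := by
            have := ha j; nlinarith [abs_nonneg (a j), neg_abs_le (a j), le_abs_self (a j)]
          have h3 : (0:ℝ) ≤ a j * a j := mul_self_nonneg _
          have h4 : ‖x j‖ ^ 2 ≤ 1 := by nlinarith [norm_nonneg (x j), hx j]
          have h5 : (0:ℝ) ≤ ‖x j‖ ^ 2 := by positivity
          have h6 : (0:ℝ) < 2 ^ n := by positivity
          rw [h1]
          have h7 : a j * a j * ‖x j‖ ^ 2 ≤ κ ^ 2 := by nlinarith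
          exact mul_le_mul_of_nonneg_right h7 h6.le
      _ = 2 ^ n * (n * κ ^ 2) := by
          rw [Finset.sum_const, Finset.card_univ, Fintype.card_fin]
          ring
  have hcard : ((Finset.univ : Finset (Fin n → Bool)).card : ℝ) = 2 ^ n := by
    simp [Finset.card_univ]
  have hCS : (∑ b : Fin n → Bool, ‖w b‖) ^ 2 ≤ (2 ^ n * (κ * Real.sqrt n)) ^ 2 := by
    calc (∑ b : Fin n → Bool, ‖w b‖) ^ 2
        ≤ ((Finset.univ : Finset (Fin n → Bool)).card : ℝ) * ∑ b : Fin n → Bool, ‖w b‖ ^ 2 :=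
          sq_sum_le_card_mul_sum_sq
      _ ≤ 2 ^ n * (2 ^ n * (n * κ ^ 2)) := by
          rw [hcard]
          exact mul_le_mul_of_nonneg_left hsqsum (by positivity)
      _ = (2 ^ n * (κ * Real.sqrt n)) ^ 2 := by
          have h7 : Real.sqrt n ^ 2 = (n : ℝ) := Real.sq_sqrt (Nat.cast_nonneg n)
          rw [mul_pow, mul_pow, h7]
          ring
  have h1 : (0:ℝ) ≤ ∑ b : Fin n → Bool, ‖w b‖ := Finset.sum_nonneg fun b _ => norm_nonneg _
  have h2 : (0:ℝ) ≤ 2 ^ n * (κ * Real.sqrt n) := by positivity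
  nlinarith [hCS, h1, h2]

/-- Empirical Rademacher complexity of the centered shallow-network class
`{x ↦ F(x;θ) − F(x;θ(0)) : ‖θᵢ − θᵢ(0)‖ ≤ p/√m}` is bounded by
`p²β/(2√m) + κp/√n`, for an activation with `β`-Lipschitz derivative bounded by `κ`. -/
theorem rademacher_shallow_network_class_bound
    (d m n : ℕ) (hm : 0 < m) (hn : 0 < n)
    (σ : ℝ → ℝ) (β κ p : ℝ) (hp : 0 < p)
    (hσ : Differentiable ℝ σ)
    (hβ : ∀ z w : ℝ, |deriv σ z - deriv σ w| ≤ β * |z - w|)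
    (hκ : ∀ z : ℝ, |deriv σ z| ≤ κ)
    (c : Fin m → ℝ) (hc : ∀ i, |c i| = 1)
    (θ0 : Fin m → EuclideanSpace ℝ (Fin d))
    (x : Fin n → EuclideanSpace ℝ (Fin d)) (hx : ∀ j, ‖x j‖ ≤ 1) :
    (1 / (n : ℝ)) * ((1 / 2 ^ n) * ∑ b : Fin n → Bool,
        ⨆ θ : {θ : Fin m → EuclideanSpace ℝ (Fin d) //
                ∀ i, ‖θ i - θ0 i‖ ≤ p / Real.sqrt m},
          ∑ j, (if b j then (1 : ℝ) else -1) *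
            ((1 / Real.sqrt m) * ∑ i, c i * (σ ⟪θ.1 i, x j⟫ - σ ⟪θ0 i, x j⟫)))
      ≤ p ^ 2 * β / (2 * Real.sqrt m) + κ * p / Real.sqrt n := by
  classical
  have hβ0 : 0 ≤ β := by
    have h := hβ 0 1
    have h3 : |(0:ℝ) - 1| = 1 := by norm_num
    rw [h3, mul_one] at h
    linarith [abs_nonneg (deriv σ 0 - deriv σ 1)]
  have hκ0 : 0 ≤ κ := le_trans (abs_nonneg _) (hκ 0)
  have hm0 : (0:ℝ) < m := by exact_mod_cast hm
  have hn0 : (0:ℝ) < n := by exact_mod_cast hn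
  set sm := Real.sqrt m with hsm
  have hsm0 : 0 < sm := Real.sqrt_pos.2 hm0
  have hsm2 : sm * sm = (m:ℝ) := Real.mul_self_sqrt hm0.le
  set sn := Real.sqrt n with hsnn
  have hsn0 : 0 < sn := Real.sqrt_pos.2 hn0
  have hsn2 : sn * sn = (n:ℝ) := Real.mul_self_sqrt hn0.le
  set D : Fin m → Fin n → ℝ := fun i j => deriv σ ⟪θ0 i, x j⟫ with hD
  set w : Fin m → (Fin n → Bool) → EuclideanSpace ℝ (Fin d) :=
    fun i b => ∑ j, ((if b j then (1:ℝ) else -1) * (c i * D i j)) • x j with hw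
  have haD : ∀ i j, |c i * D i j| ≤ κ := by
    intro i j; rw [abs_mul, hc i, one_mul, hD]; exact hκ _
  have hεabs : ∀ (b : Fin n → Bool) (j : Fin n), |if b j then (1:ℝ) else -1| = 1 := by
    intro b j; cases b j <;> norm_num
  haveI hNE : Nonempty {θ : Fin m → EuclideanSpace ℝ (Fin d) //
      ∀ i, ‖θ i - θ0 i‖ ≤ p / sm} :=
    ⟨⟨θ0, fun i => by simp only [sub_self, norm_zero]; positivity⟩⟩
  have keyA : ∀ b : Fin n → Bool,
      (⨆ θ : {θ : Fin m → EuclideanSpace ℝ (Fin d) //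
                ∀ i, ‖θ i - θ0 i‖ ≤ p / sm},
          ∑ j, (if b j then (1 : ℝ) else -1) *
            ((1 / sm) * ∑ i, c i * (σ ⟪θ.1 i, x j⟫ - σ ⟪θ0 i, x j⟫)))
        ≤ (p / m) * ∑ i, ‖w i b‖ + n * (β * p ^ 2 / (2 * sm)) := by
    intro b
    apply ciSup_le
    intro θ
    set v : Fin m → EuclideanSpace ℝ (Fin d) := fun i => θ.1 i - θ0 i with hv
    have hvn : ∀ i, ‖v i‖ ≤ p / sm := θ.2
    set R : Fin m → Fin n → ℝ :=
      fun i j => σ ⟪θ.1 i, x j⟫ - σ ⟪θ0 i, x j⟫ - D i j * ⟪v i, x j⟫ with hRdef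
    have hinner : ∀ i j, ⟪v i, x j⟫ = ⟪θ.1 i, x j⟫ - ⟪θ0 i, x j⟫ := by
      intro i j; simp only [hv]; exact inner_sub_left _ _ _
    have hinnb : ∀ i j, |⟪v i, x j⟫| ≤ p / sm := by
      intro i j
      calc |⟪v i, x j⟫| ≤ ‖v i‖ * ‖x j‖ := abs_real_inner_le_norm _ _
        _ ≤ (p / sm) * 1 := mul_le_mul (hvn i) (hx j) (norm_nonneg _) (by positivity)
        _ = p / sm := mul_one _
    have hR : ∀ i j, |R i j| ≤ β * p ^ 2 / (2 * m) := by
      intro i j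
      have ht := taylor_quad hσ hβ (⟪θ0 i, x j⟫) (⟪θ.1 i, x j⟫)
      rw [← hinner i j] at ht
      have h1 : |R i j| ≤ β / 2 * ⟪v i, x j⟫ ^ 2 := by
        simp only [hRdef, hD]
        exact ht
      have h2 : ⟪v i, x j⟫ ^ 2 ≤ (p / sm) ^ 2 := by
        have h := hinnb i j
        nlinarith [abs_nonneg (⟪v i, x j⟫ : ℝ), sq_abs (⟪v i, x j⟫ : ℝ)]
      have h3 : (p / sm) ^ 2 = p ^ 2 / m := by
        rw [div_pow, ← hsm2]; ring
      calc |R i j| ≤ β / 2 * ⟪v i, x j⟫ ^ 2 := h1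
        _ ≤ β / 2 * (p ^ 2 / (m:ℝ)) := by
            rw [← h3]; exact mul_le_mul_of_nonneg_left h2 (by linarith)
        _ = β * p ^ 2 / (2 * m) := by ring
    have hwin : ∀ i, ⟪v i, w i b⟫
        = ∑ j, ((if b j then (1:ℝ) else -1) * (c i * D i j)) * ⟪v i, x j⟫ := by
      intro i
      simp only [hw]
      rw [inner_sum]
      exact Finset.sum_congr rfl fun j _ => real_inner_smul_right _ _ _
    have hT : (∑ j, (if b j then (1 : ℝ) else -1) *
          ((1 / sm) * ∑ i, c i * (σ ⟪θ.1 i, x j⟫ - σ ⟪θ0 i, x j⟫)))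
        = (1 / sm) * ∑ i, (⟪v i, w i b⟫
            + ∑ j, (if b j then (1:ℝ) else -1) * (c i * R i j)) := by
      calc (∑ j, (if b j then (1 : ℝ) else -1) *
              ((1 / sm) * ∑ i, c i * (σ ⟪θ.1 i, x j⟫ - σ ⟪θ0 i, x j⟫)))
          = (1 / sm) * ∑ j, ∑ i, (if b j then (1 : ℝ) else -1) *
              (c i * (σ ⟪θ.1 i, x j⟫ - σ ⟪θ0 i, x j⟫)) := by
            rw [Finset.mul_sum]
            refine Finset.sum_congr rfl fun j _ => ?_
            rw [Finset.mul_sum, Finset.mul_sum, Finset.mul_sum]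
            refine Finset.sum_congr rfl fun i _ => ?_
            ring
        _ = (1 / sm) * ∑ i, ∑ j, (if b j then (1 : ℝ) else -1) *
              (c i * (D i j * ⟪v i, x j⟫ + R i j)) := by
            rw [Finset.sum_comm]
            congr 1
            refine Finset.sum_congr rfl fun i _ => Finset.sum_congr rfl fun j _ => ?_
            have hsplit : σ ⟪θ.1 i, x j⟫ - σ ⟪θ0 i, x j⟫ = D i j * ⟪v i, x j⟫ + R i j := by
              simp only [hRdef]; ring
            rw [hsplit]
        _ = (1 / sm) * ∑ i, (⟪v i, w i b⟫
              + ∑ j, (if b j then (1:ℝ) else -1) * (c i * R i j)) := by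
            congr 1
            refine Finset.sum_congr rfl fun i _ => ?_
            rw [hwin i, ← Finset.sum_add_distrib]
            refine Finset.sum_congr rfl fun j _ => ?_
            ring
    rw [hT]
    have step : ∑ i, (⟪v i, w i b⟫
          + ∑ j, (if b j then (1:ℝ) else -1) * (c i * R i j))
        ≤ ∑ i, ((p / sm) * ‖w i b‖ + n * (β * p ^ 2 / (2 * m))) := by
      refine Finset.sum_le_sum fun i _ => ?_
      refine add_le_add ?_ ?_
      · calc ⟪v i, w i b⟫ ≤ ‖v i‖ * ‖w i b‖ := real_inner_le_norm _ _
          _ ≤ (p / sm) * ‖w i b‖ := mul_le_mul_of_nonneg_right (hvn i) (norm_nonneg _)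
      · calc ∑ j, (if b j then (1:ℝ) else -1) * (c i * R i j)
            ≤ ∑ j : Fin n, β * p ^ 2 / (2 * (m:ℝ)) := by
              refine Finset.sum_le_sum fun j _ => ?_
              calc (if b j then (1:ℝ) else -1) * (c i * R i j)
                  ≤ |(if b j then (1:ℝ) else -1) * (c i * R i j)| := le_abs_self _
                _ = |R i j| := by
                    rw [abs_mul, abs_mul, hεabs b j, hc i, one_mul, one_mul]
                _ ≤ β * p ^ 2 / (2 * m) := hR i j
          _ = n * (β * p ^ 2 / (2 * (m:ℝ))) := by
              rw [Finset.sum_const, Finset.card_univ, Fintype.card_fin, nsmul_eq_mul]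
    calc (1 / sm) * ∑ i, (⟪v i, w i b⟫
            + ∑ j, (if b j then (1:ℝ) else -1) * (c i * R i j))
        ≤ (1 / sm) * ∑ i, ((p / sm) * ‖w i b‖ + n * (β * p ^ 2 / (2 * m))) :=
          mul_le_mul_of_nonneg_left step (by positivity)
      _ = (p / m) * ∑ i, ‖w i b‖ + n * (β * p ^ 2 / (2 * sm)) := by
          rw [Finset.sum_add_distrib, ← Finset.mul_sum, Finset.sum_const, Finset.card_univ,
            Fintype.card_fin, nsmul_eq_mul]
          rw [show ((m:ℝ)) = sm * sm from hsm2.symm]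
          field_simp
  have keyB : ∀ i, ∑ b : Fin n → Bool, ‖w i b‖ ≤ 2 ^ n * (κ * sn) := by
    intro i
    exact avg_norm_sum_sign x hx (fun j => c i * D i j) κ hκ0 (fun j => haD i j)
  have hcard : ((Finset.univ : Finset (Fin n → Bool)).card : ℝ) = 2 ^ n := by
    simp [Finset.card_univ]
  have hsum : (∑ b : Fin n → Bool,
        ⨆ θ : {θ : Fin m → EuclideanSpace ℝ (Fin d) //
                ∀ i, ‖θ i - θ0 i‖ ≤ p / sm},
          ∑ j, (if b j then (1 : ℝ) else -1) *
            ((1 / sm) * ∑ i, c i * (σ ⟪θ.1 i, x j⟫ - σ ⟪θ0 i, x j⟫)))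
      ≤ 2 ^ n * (p * (κ * sn) + n * (β * p ^ 2 / (2 * sm))) := by
    calc (∑ b : Fin n → Bool, ⨆ θ : {θ : Fin m → EuclideanSpace ℝ (Fin d) //
                ∀ i, ‖θ i - θ0 i‖ ≤ p / sm},
          ∑ j, (if b j then (1 : ℝ) else -1) *
            ((1 / sm) * ∑ i, c i * (σ ⟪θ.1 i, x j⟫ - σ ⟪θ0 i, x j⟫)))
        ≤ ∑ b : Fin n → Bool, ((p / m) * ∑ i, ‖w i b‖ + n * (β * p ^ 2 / (2 * sm))) :=
          Finset.sum_le_sum fun b _ => keyA b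
      _ = (p / m) * (∑ i, ∑ b : Fin n → Bool, ‖w i b‖)
            + 2 ^ n * (n * (β * p ^ 2 / (2 * sm))) := by
          rw [Finset.sum_add_distrib, ← Finset.mul_sum, Finset.sum_comm,
            Finset.sum_const, nsmul_eq_mul, hcard]
      _ ≤ (p / m) * ((m:ℝ) * (2 ^ n * (κ * sn))) + 2 ^ n * (n * (β * p ^ 2 / (2 * sm))) := by
          refine add_le_add_left (mul_le_mul_of_nonneg_left ?_ (by positivity)) _
          calc ∑ i, ∑ b : Fin n → Bool, ‖w i b‖ ≤ ∑ i : Fin m, 2 ^ n * (κ * sn) :=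
                Finset.sum_le_sum fun i _ => keyB i
            _ = (m:ℝ) * (2 ^ n * (κ * sn)) := by
                rw [Finset.sum_const, Finset.card_univ, Fintype.card_fin, nsmul_eq_mul]
      _ = 2 ^ n * (p * (κ * sn) + n * (β * p ^ 2 / (2 * sm))) := by
          field_simp
  calc (1 / (n : ℝ)) * ((1 / 2 ^ n) * ∑ b : Fin n → Bool,
        ⨆ θ : {θ : Fin m → EuclideanSpace ℝ (Fin d) //
                ∀ i, ‖θ i - θ0 i‖ ≤ p / sm},
          ∑ j, (if b j then (1 : ℝ) else -1) *
            ((1 / sm) * ∑ i, c i * (σ ⟪θ.1 i, x j⟫ - σ ⟪θ0 i, x j⟫)))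
      ≤ (1 / (n : ℝ)) * ((1 / 2 ^ n) *
          (2 ^ n * (p * (κ * sn) + n * (β * p ^ 2 / (2 * sm))))) := by
        refine mul_le_mul_of_nonneg_left (mul_le_mul_of_nonneg_left hsum ?_) ?_
        · positivity
        · positivity
    _ = p ^ 2 * β / (2 * sm) + κ * p / sn := by
        have h2n : (2:ℝ) ^ n ≠ 0 := by positivity
        rw [show ((n:ℝ)) = sn * sn from hsn2.symm]
        field_simp
        ring
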